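/- For all integers d ≥ 2, p ≥ 2^{d-1} + 1, and r ≥ d - 1, one has F_χ(r, p, d) ≥ 2^r + 1. In particular, for every fixed p, the function F_χ(r, p, q) is exponential in r whenever q ≤ ⌈log₂ p⌉. -/

import Mathlib

open Finset

/-- The graph of the edges of `K_n` whose color lies in `Q`. -/
def unionGraph {n N : ℕ} (col : Sym2 (Fin n) → Fin N) (Q : Finset (Fin N)) : SimpleGraph (Fin n) :=
  SimpleGraph.fromRel (fun v w => col s(v, w) ∈ Q)

/-- `Fchi r p q` : the minimum `n` such that every edge-coloring of `K_n` with `r` colors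
contains a subgraph of chromatic number at least `p` whose edges receive at most `q - 1`
distinct colors. -/
noncomputable def Fchi (r p q : ℕ) : ℕ :=
  sInf { n : ℕ | ∀ col : Sym2 (Fin n) → Fin r,
    ∃ Q : Finset (Fin r), Q.card ≤ q - 1 ∧ ¬ (unionGraph col Q).Colorable (p - 1) }

/-- Greedy construction of a "chain": a sequence of vertices each assigned a color such that
all edges from a vertex to later vertices have the assigned color. -/
lemma chain_lemma (r : ℕ) (hr : 0 < r) :
    ∀ (m n : ℕ) (col : Sym2 (Fin n) → Fin r) (S : Finset (Fin n)),
      (r+1) ^ m ≤ S.card →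
      ∃ l : List (Fin n × Fin r), l.length = m ∧ (∀ a ∈ l, a.1 ∈ S) ∧
        l.Pairwise (fun a b => a.1 ≠ b.1 ∧ col s(a.1, b.1) = a.2) := by
  intro m
  induction m with
  | zero => intro n col S h; exact ⟨[], rfl, by simp, List.Pairwise.nil⟩
  | succ m ih =>
    intro n col S h
    obtain ⟨v, hv⟩ : S.Nonempty := Finset.card_pos.mp
      (lt_of_lt_of_le (Nat.pow_pos (by omega)) h)
    set F : Fin r → Finset (Fin n) := fun c => (S.erase v).filter (fun w => col s(v, w) = c)
      with hF
    have hsum : ∑ c : Fin r, (F c).card = (S.erase v).card := by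
      rw [← Finset.card_eq_sum_card_fiberwise (f := fun w => col s(v, w)) (t := Finset.univ)]
      intro x _; exact Finset.mem_univ _
    have hcard : (r+1)^(m+1) - 1 ≤ (S.erase v).card := by
      have := Finset.card_erase_of_mem hv
      omega
    obtain ⟨c, hc⟩ : ∃ c : Fin r, (r+1)^m ≤ (F c).card := by
      by_contra hcon
      push_neg at hcon
      have h1 : (∑ c : Fin r, (F c).card) + r ≤ r * (r+1)^m := by
        calc (∑ c : Fin r, (F c).card) + r = ∑ c : Fin r, ((F c).card + 1) := by
              rw [Finset.sum_add_distrib]; simp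
          _ ≤ ∑ _c : Fin r, (r+1)^m := Finset.sum_le_sum (fun c _ => hcon c)
          _ = r * (r+1)^m := by simp [mul_comm]
      have h3 : 1 ≤ (r+1)^m := Nat.one_le_pow _ _ (by omega)
      have h5 : r * (r+1)^m + (r+1)^m ≤ (S.erase v).card + 1 := by
        have h2 : (r+1)^(m+1) = r * (r+1)^m + (r+1)^m := by ring
        omega
      rw [hsum] at h1
      linarith
    obtain ⟨l, hlen, hmem, hpw⟩ := ih n col (F c) hc
    refine ⟨(v, c) :: l, by simp [hlen], ?_, ?_⟩
    · intro a ha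
      rcases List.mem_cons.mp ha with h | h
      · simp [h, hv]
      · exact Finset.mem_of_mem_erase (Finset.mem_of_mem_filter _ (hmem a h))
    · refine List.Pairwise.cons ?_ hpw
      intro b hb
      have hbF := hmem b hb
      rw [hF, Finset.mem_filter] at hbF
      exact ⟨(Finset.ne_of_mem_erase hbF.1).symm, hbF.2⟩

/-- A weak multicolor Ramsey theorem: if `n ≥ (r+1)^(r(p-1)+1)` then every `r`-coloring of the
edges of `K_n` contains a monochromatic set of `p` vertices. -/
lemma ramsey_mem (r p : ℕ) (hr : 0 < r) (hp : 1 ≤ p) (n : ℕ)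
    (hn : (r+1)^(r*(p-1)+1) ≤ n) (col : Sym2 (Fin n) → Fin r) :
    ∃ (c : Fin r) (T : Finset (Fin n)), T.card = p ∧
      ∀ u ∈ T, ∀ w ∈ T, u ≠ w → col s(u, w) = c := by
  obtain ⟨l, hlen, -, hpw⟩ := chain_lemma r hr (r*(p-1)+1) n col Finset.univ
    (by simpa using hn)
  -- distinct first components
  have hfst : ∀ a ∈ l, ∀ b ∈ l, a ≠ b → a.1 ≠ b.1 := by
    intro a ha b hb hne
    haveI : Std.Symm (fun x y : Fin n × Fin r => x.1 ≠ y.1) := ⟨fun x y h => h.symm⟩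
    exact (hpw.imp (fun h => h.1)).forall ha hb hne
  -- symmetric color relation
  have hQ : ∀ a ∈ l, ∀ b ∈ l, a ≠ b →
      (col s(a.1, b.1) = a.2 ∨ col s(a.1, b.1) = b.2) := by
    have hpw2 : l.Pairwise (fun x y => col s(x.1, y.1) = x.2 ∨ col s(x.1, y.1) = y.2) :=
      hpw.imp (fun h => Or.inl h.2)
    have hsymm : Symmetric (fun (x y : Fin n × Fin r) =>
        col s(x.1, y.1) = x.2 ∨ col s(x.1, y.1) = y.2) := by
      intro x y h
      rw [Sym2.eq_swap]
      exact h.symm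
    intro a ha b hb hne
    haveI : Std.Symm (fun (x y : Fin n × Fin r) =>
        col s(x.1, y.1) = x.2 ∨ col s(x.1, y.1) = y.2) := ⟨fun x y h => hsymm h⟩
    exact List.Pairwise.forall hpw2 ha hb hne
  have hnd : l.Nodup := hpw.imp (fun h => fun heq => h.1 (by rw [heq]))
  -- pigeonhole on colors
  have hcards : (l.toFinset).card = r * (p-1) + 1 := by
    rw [List.toFinset_card_of_nodup hnd, hlen]
  obtain ⟨c, -, hc⟩ : ∃ c ∈ (Finset.univ : Finset (Fin r)),
      p - 1 < ((l.toFinset).filter (fun a => a.2 = c)).card := by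
    apply Finset.exists_lt_card_fiber_of_mul_lt_card_of_maps_to
    · intro a _; exact Finset.mem_univ _
    · simp only [Finset.card_univ, Fintype.card_fin, hcards]
      omega
  set lf := (l.toFinset).filter (fun a => a.2 = c) with hlf
  have hinj : Set.InjOn Prod.fst (lf : Set (Fin n × Fin r)) := by
    intro a ha b hb hab
    by_contra hne
    exact hfst a (by simpa using (Finset.mem_filter.mp ha).1)
      b (by simpa using (Finset.mem_filter.mp hb).1) hne hab
  have hT0 : p ≤ (lf.image Prod.fst).card := by
    rw [Finset.card_image_of_injOn hinj]; omega
  obtain ⟨T, hTsub, hTcard⟩ := Finset.exists_subset_card_eq hT0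
  refine ⟨c, T, hTcard, ?_⟩
  intro u hu w hw huw
  obtain ⟨a, ha, rfl⟩ := Finset.mem_image.mp (hTsub hu)
  obtain ⟨b, hb, rfl⟩ := Finset.mem_image.mp (hTsub hw)
  have hab : a ≠ b := fun h => huw (by rw [h])
  have hac := (Finset.mem_filter.mp ha).2
  have hbc := (Finset.mem_filter.mp hb).2
  rcases hQ a (by simpa using (Finset.mem_filter.mp ha).1)
      b (by simpa using (Finset.mem_filter.mp hb).1) hab with h | h
  · rw [h, hac]
  · rw [h, hbc]

/-- The binary-vector coloring: when `n ≤ 2^r`, coloring each edge by a coordinate where the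
binary representations of the endpoints differ yields a coloring in which every union of at
most `d - 1` color classes is `2^(d-1)`-colorable (hence `(p-1)`-colorable). -/
lemma construct (r n d p : ℕ) (hr : 0 < r) (hn : n ≤ 2^r)
    (hp : 2^(d-1) + 1 ≤ p) :
    ∃ col : Sym2 (Fin n) → Fin r, ∀ Q : Finset (Fin r), Q.card ≤ d - 1 →
      (unionGraph col Q).Colorable (p - 1) := by
  obtain ⟨f⟩ : Nonempty (Fin n ↪ (Fin r → Bool)) := by
    rw [Function.Embedding.nonempty_iff_card_le]
    simpa using hn
  set D : Fin n → Fin n → Finset (Fin r) :=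
    fun v w => Finset.univ.filter (fun i => f v i ≠ f w i) with hD
  have hDsymm : ∀ v w, D v w = D w v := by
    intro v w
    simp only [hD]
    congr 1
    ext i
    exact ne_comm
  set g : Fin n → Fin n → Fin r :=
    fun v w => if h : (D v w).Nonempty then (D v w).min' h else ⟨0, hr⟩ with hg
  have hgsymm : ∀ v w, g v w = g w v := by
    intro v w
    simp only [hg, hDsymm v w]
  set col : Sym2 (Fin n) → Fin r := Sym2.lift ⟨g, hgsymm⟩ with hcol
  have key : ∀ v w : Fin n, v ≠ w → f v (col s(v, w)) ≠ f w (col s(v, w)) := by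
    intro v w hvw
    have hne : (D v w).Nonempty := by
      by_contra hcon
      rw [Finset.not_nonempty_iff_eq_empty] at hcon
      apply hvw
      apply f.injective
      funext i
      by_contra hi
      have : i ∈ D v w := by simp [hD, hi]
      simp [hcon] at this
    have hmin : (D v w).min' hne ∈ D v w := Finset.min'_mem _ _
    have hcoleq : col s(v, w) = (D v w).min' hne := by
      simp [hcol, hg, Sym2.lift_mk, hne]
    rw [hcoleq]
    simpa [hD] using hmin
  refine ⟨col, fun Q hQ => ?_⟩
  have hcolor : (unionGraph col Q).Coloring ({x // x ∈ Q} → Bool) := by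
    refine SimpleGraph.Coloring.mk (fun v => fun i => f v i.1) ?_
    intro v w hadj
    rw [unionGraph, SimpleGraph.fromRel_adj] at hadj
    obtain ⟨hvw, hor⟩ := hadj
    have hmem : col s(v, w) ∈ Q := by
      rcases hor with h | h
      · exact h
      · rwa [Sym2.eq_swap]
    intro heq
    exact key v w hvw (congrFun heq ⟨col s(v, w), hmem⟩)
  have hcard : Fintype.card ({x // x ∈ Q} → Bool) = 2 ^ Q.card := by
    simp [Fintype.card_fun]
  refine (hcolor.colorable).mono ?_
  rw [hcard]
  calc 2 ^ Q.card ≤ 2 ^ (d - 1) := Nat.pow_le_pow_right (by norm_num) hQ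
    _ ≤ p - 1 := by omega

/-- For `d ≥ 2`, `p ≥ 2^{d-1} + 1` and `r ≥ d - 1` one has `F_χ(r, p, d) ≥ 2^r + 1`;
in particular `F_χ(r, p, q) ≥ 2^r + 1` whenever `2 ≤ q ≤ ⌈log₂ p⌉` and `r ≥ q - 1`,
so for fixed `p` the function `F_χ(r,p,q)` is exponential in `r` for `q ≤ ⌈log₂ p⌉`. -/
theorem stmt17 :
    (∀ d p r : ℕ, 2 ≤ d → 2 ^ (d - 1) + 1 ≤ p → d - 1 ≤ r →
      2 ^ r + 1 ≤ Fchi r p d) ∧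
    (∀ p q r : ℕ, 2 ≤ q → q ≤ Nat.clog 2 p → q - 1 ≤ r →
      2 ^ r + 1 ≤ Fchi r p q) := by
  have main : ∀ d p r : ℕ, 2 ≤ d → 2 ^ (d - 1) + 1 ≤ p → d - 1 ≤ r →
      2 ^ r + 1 ≤ Fchi r p d := by
    intro d p r hd hp hdr
    have hr : 0 < r := by omega
    have hp1 : 1 ≤ p := by
      have := Nat.one_le_pow (d-1) 2 (by norm_num)
      omega
    set S := { n : ℕ | ∀ col : Sym2 (Fin n) → Fin r,
      ∃ Q : Finset (Fin r), Q.card ≤ d - 1 ∧ ¬ (unionGraph col Q).Colorable (p - 1) } with hS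
    have hne : S.Nonempty := by
      refine ⟨(r+1)^(r*(p-1)+1), ?_⟩
      intro col
      obtain ⟨c, T, hT, hcl⟩ := ramsey_mem r p hr hp1 _ le_rfl col
      refine ⟨{c}, by simp; omega, ?_⟩
      intro hcolor
      have hfree := hcolor.cliqueFree (show p - 1 < p by omega)
      apply hfree T
      constructor
      · intro u hu w hw huw
        refine ⟨huw, Or.inl ?_⟩
        show col s(u, w) ∈ ({c} : Finset (Fin r))
        rw [hcl u (Finset.mem_coe.mp hu) w (Finset.mem_coe.mp hw) huw]
        exact Finset.mem_singleton_self c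
      · exact hT
    have hmem := Nat.sInf_mem hne
    have hFchi : Fchi r p d = sInf S := rfl
    by_contra hcon
    push_neg at hcon
    rw [hFchi] at hcon
    obtain ⟨col, hcol⟩ := construct r (sInf S) d p hr (by omega) hp
    obtain ⟨Q, hQ1, hQ2⟩ := hmem col
    exact hQ2 (hcol Q hQ1)
  refine ⟨main, ?_⟩
  intro p q r hq hclog hqr
  apply main q p r hq ?_ hqr
  have : 2 ^ (q-1) < p := by
    rw [← Nat.lt_clog_iff_pow_lt (by norm_num)]
    omega
  omega
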